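/- Let a, b ∈ ℚ with a ≠ 0, f_n(x) = (1/a)(T_n(ax+b) − b), and let m, n be positive integers with m < n and m ∤ n; set k = ⌊n/m⌋. Then the remainder of the Euclidean division of f_n by f_m in ℚ[x] equals c_{k+1}·f_{n−km}(x) − c_k·f_{(k+1)m−n}(x) + (b/a)(c_{k+1} − c_k − 1), where c_i = U_{i−1}(b). -/

import Mathlib

open Polynomial

open Polynomial.Chebyshev in
lemma Tdeg_le' (n : ℕ) : (T ℚ (n:ℤ)).degree ≤ n := by
  induction n using Nat.twoStepInduction with
  | zero => simp [T_zero]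
  | one => simp [T_one, degree_X_le]
  | more j h1 h2 =>
    push_cast at h2 ⊢
    rw [T_add_two]
    have h2X : degree (2 * X : ℚ[X]) ≤ 1 := by
      rw [show (2 * X : ℚ[X]) = C 2 * X by rw [map_ofNat]]
      exact le_of_eq (degree_C_mul_X (by norm_num))
    refine le_trans (degree_sub_le _ _) (max_le ?_ ?_)
    · refine le_trans (degree_mul_le _ _) ?_
      refine le_trans (add_le_add h2X h2) ?_
      rw [show ((j:WithBot ℕ) + 2) = ((1:ℕ):WithBot ℕ) + ((j+1:ℕ):WithBot ℕ) by push_cast; ring]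
      exact le_refl _
    · exact le_trans h1 (by exact_mod_cast (by omega : j ≤ j+2))

open Polynomial.Chebyshev in
lemma Tcoeff' (n : ℕ) : (T ℚ ((n:ℤ)+1)).coeff (n+1) = 2^n := by
  induction n using Nat.twoStepInduction with
  | zero => simp [T_one]
  | one => norm_num [T_two, coeff_sub, coeff_X_pow, coeff_one]
  | more j h1 h2 =>
    push_cast at h2 ⊢
    rw [show ((j:ℤ)+2)+1 = ((j:ℤ)+1)+2 by ring, T_add_two]
    have hz : (T ℚ ((j:ℤ)+1)).coeff (j+3) = 0 := by
      apply coeff_eq_zero_of_degree_lt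
      refine lt_of_le_of_lt (by exact_mod_cast Tdeg_le' (j+1)) ?_
      exact_mod_cast (by omega : j+1 < j+3)
    have hx : (2 * X * T ℚ (((j:ℤ)+1)+1)).coeff (j+3)
        = 2 * (T ℚ (((j:ℤ)+1)+1)).coeff (j+2) := by
      rw [mul_assoc, coeff_ofNat_mul, coeff_X_mul]
    rw [show (j+2)+1 = j+3 from rfl, coeff_sub, hx, hz, sub_zero]
    rw [show (T ℚ ((j:ℤ)+1+1)).coeff (j+2) = 2^(j+1) from by exact_mod_cast h2]
    ring

open Polynomial.Chebyshev in
lemma cheb_key' (b : ℚ) (m r : ℤ) : ∀ j : ℕ,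
    (T ℚ m - C b) ∣
      (T ℚ ((j:ℤ)*m + r) -
        (C ((U ℚ (j:ℤ)).eval b) * T ℚ r - C ((U ℚ ((j:ℤ)-1)).eval b) * T ℚ (r - m))) := by
  intro j
  induction j using Nat.twoStepInduction with
  | zero =>
    simp only [Nat.cast_zero, zero_mul, zero_add, U_zero, eval_one, map_one, one_mul,
      zero_sub, U_neg_one, eval_zero, map_zero, zero_mul]
    simp
  | one =>
    refine ⟨2 * T ℚ r, ?_⟩
    have h := T_mul_T ℚ m r
    have hneg : T ℚ (r - m) = T ℚ (m - r) := by
      rw [show r - m = -(m - r) by ring, T_neg]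
    simp only [Nat.cast_one, one_mul, U_one, sub_self, U_zero, eval_one, map_one,
      eval_mul, eval_ofNat, eval_X, map_mul, map_ofNat]
    linear_combination hneg - h
  | more j h1 h2 =>
    push_cast at h1 h2 ⊢
    obtain ⟨p, hp⟩ := h1
    obtain ⟨q, hq⟩ := h2
    refine ⟨2 * T ℚ (((j:ℤ)+1)*m + r) + 2 * C b * q - p, ?_⟩
    have hmul := T_mul_T ℚ m (((j:ℤ)+1)*m + r)
    have hneg : T ℚ (m - (((j:ℤ)+1)*m + r)) = T ℚ ((j:ℤ)*m + r) := by
      rw [show m - (((j:ℤ)+1)*m + r) = -((j:ℤ)*m + r) by ring, T_neg]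
    have hU2 : (C ((U ℚ ((j:ℤ)+2)).eval b) : ℚ[X])
        = 2 * C b * C ((U ℚ ((j:ℤ)+1)).eval b) - C ((U ℚ (j:ℤ)).eval b) := by
      rw [U_add_two]
      simp only [eval_sub, eval_mul, eval_ofNat, eval_X, map_sub, map_mul, map_ofNat]
    have hU1 : (C ((U ℚ ((j:ℤ)+1)).eval b) : ℚ[X])
        = 2 * C b * C ((U ℚ (j:ℤ)).eval b) - C ((U ℚ ((j:ℤ)-1)).eval b) := by
      rw [U_add_one]
      simp only [eval_sub, eval_mul, eval_ofNat, eval_X, map_sub, map_mul, map_ofNat]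
    rw [show ((j:ℤ)+2)-1 = (j:ℤ)+1 by ring, show ((j:ℤ)+1)-1 = (j:ℤ) by ring] at *
    rw [show ((j:ℤ)+2)*m + r = m + (((j:ℤ)+1)*m + r) by ring]
    linear_combination -hmul - hneg + 2*C b*hq - hp - T ℚ r * hU2 + T ℚ (r-m) * hU1

theorem chebyshev_chain_mod_of_not_dvd (a b : ℚ) (ha : a ≠ 0)
    (f : ℕ → ℚ[X])
    (hf : ∀ j : ℕ, f j =
      C a⁻¹ * ((Polynomial.Chebyshev.T ℚ (j : ℤ)).comp (C a * X + C b) - C b))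
    (c : ℕ → ℚ)
    (hc : ∀ i : ℕ, c i = (Polynomial.Chebyshev.U ℚ ((i : ℤ) - 1)).eval b)
    (m n : ℕ) (hm : 0 < m) (hmn : m < n) (hnd : ¬ m ∣ n)
    (k : ℕ) (hk : k = n / m) :
    f n % f m = C (c (k + 1)) * f (n - k * m) - C (c k) * f ((k + 1) * m - n)
        + C (b / a * (c (k + 1) - c k - 1)) := by
  open Polynomial.Chebyshev in
  set L : ℚ[X] := C a * X + C b with hLdef
  -- natural number arithmetic
  have hmod : n % m + m * k = n := by rw [hk]; exact Nat.mod_add_div n m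
  have hq1 : m * k = k * m := Nat.mul_comm m k
  have hq2 : (k+1) * m = k * m + m := by ring
  have hmodne : n % m ≠ 0 := fun h => hnd (Nat.dvd_of_mod_eq_zero h)
  have hmodlt : n % m < m := Nat.mod_lt n hm
  set r := n - k * m with hrdef
  set s := (k + 1) * m - n with hsdef
  have hkm : k * m ≤ n := by omega
  have hreq : r = n % m := by omega
  have hr1 : 1 ≤ r := by omega
  have hr2 : r < m := by omega
  have hs1 : s = m - r := by omega
  have hs2 : s < m := by omega
  have hrZ : (r : ℤ) = (n : ℤ) - k * m := by
    rw [hrdef, Nat.cast_sub hkm]; push_cast; ring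
  have hsZ : (s : ℤ) = ((k : ℤ) + 1) * m - n := by
    have hle : n ≤ (k+1) * m := by omega
    rw [hsdef, Nat.cast_sub hle]; push_cast; ring
  -- degree of T m
  have hTm : (T ℚ (m:ℤ)).degree = (m : ℕ) := by
    have hco := Tcoeff' (m-1)
    rw [show (((m-1:ℕ):ℤ)+1) = (m:ℤ) by push_cast; omega, show (m-1)+1 = m by omega] at hco
    exact degree_eq_of_le_of_coeff_ne_zero (Tdeg_le' m) (by rw [hco]; positivity)
  have hTmnat : (T ℚ (m:ℤ)).natDegree = m := natDegree_eq_of_degree_eq_some hTm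
  have hLd : L.natDegree = 1 := natDegree_linear ha
  have hcompnat : ((T ℚ (m:ℤ)).comp L).natDegree = m := by
    rw [natDegree_comp, hLd, hTmnat, mul_one]
  have hcompne : (T ℚ (m:ℤ)).comp L ≠ 0 := fun h => by
    rw [h, natDegree_zero] at hcompnat; omega
  have hcompdeg : ((T ℚ (m:ℤ)).comp L).degree = (m:ℕ) := by
    rw [degree_eq_natDegree hcompne, hcompnat]
  have hfm_deg : (f m).degree = (m:ℕ) := by
    rw [hf m, degree_C_mul (inv_ne_zero ha), sub_eq_add_neg,
      degree_add_eq_left_of_degree_lt, hcompdeg]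
    rw [degree_neg, hcompdeg]
    exact lt_of_le_of_lt degree_C_le (by exact_mod_cast hm)
  have hfm_ne : f m ≠ 0 := fun h => by
    rw [h, degree_zero] at hfm_deg
    exact absurd hfm_deg (by simp)
  -- degree bound for f j
  have hfle : ∀ j : ℕ, (f j).degree ≤ (j:ℕ) := by
    intro j
    rw [hf j]
    refine le_trans (degree_mul_le _ _) ?_
    refine le_trans (add_le_add degree_C_le (degree_sub_le _ _)) ?_
    rw [zero_add]
    refine max_le ?_ (le_trans degree_C_le (by exact_mod_cast Nat.zero_le j))
    have hnd1 : ((T ℚ (j:ℤ)).comp L).natDegree ≤ j :=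
      le_trans natDegree_comp_le
        (by rw [hLd, mul_one]; exact natDegree_le_iff_degree_le.2 (Tdeg_le' j))
    exact le_trans degree_le_natDegree (by exact_mod_cast hnd1)
  set R : ℚ[X] := C (c (k + 1)) * f r - C (c k) * f s + C (b / a * (c (k + 1) - c k - 1))
    with hRdef
  have hRdeg : R.degree < (f m).degree := by
    rw [hfm_deg]
    refine lt_of_le_of_lt (degree_add_le _ _) (max_lt (lt_of_le_of_lt (degree_sub_le _ _)
      (max_lt ?_ ?_)) (lt_of_le_of_lt degree_C_le (by exact_mod_cast hm)))
    · refine lt_of_le_of_lt (degree_mul_le _ _)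
        (lt_of_le_of_lt (add_le_add degree_C_le (hfle r)) ?_)
      rw [zero_add]; exact_mod_cast hr2
    · refine lt_of_le_of_lt (degree_mul_le _ _)
        (lt_of_le_of_lt (add_le_add degree_C_le (hfle s)) ?_)
      rw [zero_add]; exact_mod_cast hs2
  -- the key divisibility
  obtain ⟨w, hw⟩ := cheb_key' b m r k
  rw [show (k:ℤ)*(m:ℤ) + (r:ℤ) = (n:ℤ) by rw [hrZ]; ring] at hw
  rw [show (r:ℤ) - (m:ℤ) = -(s:ℤ) by rw [hrZ, hsZ]; ring, T_neg] at hw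
  have hc1 : (C (c (k+1)) : ℚ[X]) = C ((U ℚ (k:ℤ)).eval b) := by
    rw [hc, show ((k+1:ℕ):ℤ) - 1 = (k:ℤ) by push_cast; ring]
  have hc0 : (C (c k) : ℚ[X]) = C ((U ℚ ((k:ℤ)-1)).eval b) := by rw [hc]
  rw [← hc1, ← hc0] at hw
  have hwc := congrArg (fun p : ℚ[X] => p.comp L) hw
  simp only [sub_comp, mul_comp, C_comp] at hwc
  -- the division equation
  have heq : f n = f m * w.comp L + R := by
    rw [hRdef, hf n, hf m, hf r, hf s]
    have hba : (C (b / a * (c (k+1) - c k - 1)) : ℚ[X])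
        = C a⁻¹ * (C b * (C (c (k+1)) - C (c k) - 1)) := by
      rw [show b / a * (c (k+1) - c k - 1) = a⁻¹ * (b * (c (k+1) - c k - 1)) by ring]
      simp [map_mul, map_sub]
    rw [hba]
    linear_combination C a⁻¹ * hwc
  -- conclude via uniqueness of division
  have hlc : (f m).leadingCoeff ≠ 0 := leadingCoeff_ne_zero.2 hfm_ne
  rw [Polynomial.mod_def]
  refine (div_modByMonic_unique (C (f m).leadingCoeff * w.comp L) R
    (monic_mul_leadingCoeff_inv hfm_ne) ⟨?_, ?_⟩).2
  · rw [heq]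
    rw [show f m * C (f m).leadingCoeff⁻¹ * (C (f m).leadingCoeff * w.comp L)
        = f m * (C (f m).leadingCoeff⁻¹ * C (f m).leadingCoeff) * w.comp L by ring,
      ← Polynomial.C_mul, inv_mul_cancel₀ hlc, C_1, mul_one]
    ring
  · rw [degree_mul_leadingCoeff_inv _ hfm_ne]
    exact hRdeg
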